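/- arXiv:2501.15127 — 2 statements merged into one kernel-verified Lean document; each statement's English description precedes it below -/
import Mathlib

section
/- For any constant c > 0 and dimensions d₁ ≥ d₂ ≥ 1, it holds that T_{d₁,c}(α) ≤ T_{d₂,c}(α) for every α ∈ [0,1]. -/
open MeasureTheory ProbabilityTheory Real Filter Topology
open scoped NNReal ENNReal

noncomputable section

/-- The exponential distribution with rate 1 on `ℝ`. -/
def expOne : Measure ℝ :=
  (volume.restrict (Set.Ioi (0 : ℝ))).withDensity fun w => ENNReal.ofReal (Real.exp (-w))

/-- The centered Gaussian measure on `ℝ^d` with covariance matrix `σ2 • I_d`. -/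
def gaussPi (d : ℕ) (σ2 : ℝ) : Measure (Fin d → ℝ) :=
  Measure.pi fun _ => gaussianReal 0 σ2.toNNReal

/-- The symmetric multivariate Laplace distribution `SL_d(σ2 • I_d)`:
the law of `√W • X` with `W ~ Exp(1)` and `X ~ N(0, σ2 I_d)` independent. -/
def SLM (d : ℕ) (σ2 : ℝ) : Measure (Fin d → ℝ) :=
  Measure.map (fun p : ℝ × (Fin d → ℝ) => Real.sqrt p.1 • p.2) (expOne.prod (gaussPi d σ2))

/-- The zero-inflated symmetric multivariate Laplace distribution `ZIL(δ, σ2 • I_d)`: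
the law of `1{ξ = 0} • S` with `ξ ~ Bernoulli(δ)` and `S ~ SL_d(σ2 I_d)` independent. -/
def ZILM (d : ℕ) (δ : ℝ) (σ2 : ℝ) : Measure (Fin d → ℝ) :=
  ENNReal.ofReal δ • Measure.dirac (0 : Fin d → ℝ) + ENNReal.ofReal (1 - δ) • SLM d σ2

/-- The trade-off function `T(P, Q)` between two measures. -/
def tradeOff {Ω : Type*} [MeasurableSpace Ω] (P Q : Measure Ω) (α : ℝ) : ℝ :=
  sInf {b | ∃ φ : Ω → ℝ, Measurable φ ∧ (∀ ω, φ ω ∈ Set.Icc (0 : ℝ) 1) ∧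
    (∫ ω, φ ω ∂P) ≤ α ∧ b = 1 - ∫ ω, φ ω ∂Q}

/-- `T_{d,c}`: the trade-off function between `SL_d(I_d)` and `(c, 0, …, 0)ᵀ + SL_d(I_d)`. -/
def Tdc (d : ℕ) (c : ℝ) (α : ℝ) : ℝ :=
  tradeOff (SLM d 1)
    (Measure.map (fun x => (fun j : Fin d => if (j : ℕ) = 0 then c else 0) + x) (SLM d 1)) α

/-- `T_{d,c,δ}`. -/
def Tdcd (d : ℕ) (c δ : ℝ) (α : ℝ) : ℝ :=
  if α ≤ 1 - δ then (1 - δ) * Tdc d c (α / (1 - δ)) else 0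

/-- The law `P` of `(√W · X₁, W)`. -/
def pairP : Measure (ℝ × ℝ) :=
  Measure.map (fun p : ℝ × ℝ => (Real.sqrt p.1 * p.2, p.1)) (expOne.prod (gaussianReal 0 1))

/-- The law `Q` of `(c + √W · X₁, W)`. -/
def pairQ (c : ℝ) : Measure (ℝ × ℝ) :=
  Measure.map (fun p : ℝ × ℝ => (c + Real.sqrt p.1 * p.2, p.1)) (expOne.prod (gaussianReal 0 1))

/-- `β_c`: the trade-off function between the laws of `(√W·X₁, W)` and `(c + √W·X₁, W)`. -/
def betaC (c : ℝ) (α : ℝ) : ℝ := tradeOff pairP (pairQ c) α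

/-- `β_{c,δ}`. -/
def betaCD (c δ : ℝ) (α : ℝ) : ℝ :=
  if α ≤ 1 - δ then (1 - δ) * betaC c (α / (1 - δ)) else 0

/-- The standard normal cumulative distribution function `Φ`. -/
def stdNormCDF (x : ℝ) : ℝ := ((gaussianReal 0 1) (Set.Iic x)).toReal

/-- `F_c(x) = ∫₀^∞ Φ(√w·x/c + c/(2√w)) e^{−w} dw`. -/
def Fc (c x : ℝ) : ℝ :=
  ∫ w in Set.Ioi (0 : ℝ),
    stdNormCDF (Real.sqrt w * x / c + c / (2 * Real.sqrt w)) * Real.exp (-w)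

/-- The quantile function of `F_c`. -/
def FcInv (c p : ℝ) : ℝ := sInf {x : ℝ | p ≤ Fc c x}

end

noncomputable section Aux

namespace TdcAux

instance expOne_prob : IsProbabilityMeasure expOne := by
  constructor
  rw [expOne, withDensity_apply _ MeasurableSet.univ, Measure.restrict_univ]
  have hint : IntegrableOn (fun x : ℝ => Real.exp (-x)) (Set.Ioi 0) := by
    have := exp_neg_integrableOn_Ioi 0 (one_pos (α := ℝ))
    simpa using this
  rw [← ofReal_integral_eq_lintegral_ofReal hint
    (Filter.Eventually.of_forall fun x => (Real.exp_pos _).le)]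
  rw [integral_exp_neg_Ioi_zero]
  simp

instance gaussPi_prob (d : ℕ) (σ2 : ℝ) : IsProbabilityMeasure (gaussPi d σ2) := by
  rw [gaussPi]; infer_instance

/-- Projection onto the first `d₂` coordinates. -/
def proj {d₁ d₂ : ℕ} (hd : d₂ ≤ d₁) : (Fin d₁ → ℝ) → (Fin d₂ → ℝ) :=
  fun x => x ∘ Fin.castLE hd

lemma measurable_proj {d₁ d₂ : ℕ} (hd : d₂ ≤ d₁) : Measurable (proj hd) :=
  measurable_pi_lambda _ fun j => measurable_pi_apply _

lemma measurable_smulmap (d : ℕ) :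
    Measurable (fun p : ℝ × (Fin d → ℝ) => Real.sqrt p.1 • p.2) := by
  apply measurable_pi_lambda
  intro i
  simp only [Pi.smul_apply, smul_eq_mul]
  exact (Real.continuous_sqrt.measurable.comp measurable_fst).mul
    ((measurable_pi_apply i).comp measurable_snd)

instance SLM_prob (d : ℕ) (σ2 : ℝ) : IsProbabilityMeasure (SLM d σ2) := by
  rw [SLM]
  exact Measure.isProbabilityMeasure_map (measurable_smulmap d).aemeasurable

lemma measurable_shift {d : ℕ} (v : Fin d → ℝ) :
    Measurable (fun x : Fin d → ℝ => v + x) := by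
  apply measurable_pi_lambda
  intro i
  simp only [Pi.add_apply]
  exact measurable_const.add (measurable_pi_apply i)

lemma map_proj_gaussPi {d₁ d₂ : ℕ} (hd : d₂ ≤ d₁) (σ2 : ℝ) :
    Measure.map (proj hd) (gaussPi d₁ σ2) = gaussPi d₂ σ2 := by
  set ν : Measure ℝ := gaussianReal 0 σ2.toNNReal with hν
  rw [gaussPi, gaussPi]
  refine (Measure.pi_eq fun s hs => ?_).symm
  rw [Measure.map_apply (measurable_proj hd) (MeasurableSet.univ_pi hs)]
  set t : Fin d₁ → Set ℝ := fun i =>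
    if h : (i : ℕ) < d₂ then s ⟨(i : ℕ), h⟩ else Set.univ with ht
  have hpre : proj hd ⁻¹' Set.pi Set.univ s = Set.pi Set.univ t := by
    ext x
    simp only [proj, Set.mem_preimage, Set.mem_pi, Set.mem_univ, true_implies,
      Function.comp_apply, ht]
    constructor
    · intro h i
      by_cases h' : (i : ℕ) < d₂
      · rw [dif_pos h']
        have := h ⟨(i : ℕ), h'⟩
        have heq : Fin.castLE hd ⟨(i : ℕ), h'⟩ = i := by
          apply Fin.ext; rfl
        rwa [heq] at this
      · rw [dif_neg h']; trivial
    · intro h j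
      have := h (Fin.castLE hd j)
      have hjlt : ((Fin.castLE hd j : Fin d₁) : ℕ) < d₂ := j.isLt
      rw [dif_pos hjlt] at this
      have heq : (⟨((Fin.castLE hd j : Fin d₁) : ℕ), hjlt⟩ : Fin d₂) = j := by
        apply Fin.ext; rfl
      rwa [heq] at this
  rw [hpre, Measure.pi_pi]
  set f : ℕ → ℝ≥0∞ := fun n => if h : n < d₂ then ν (s ⟨n, h⟩) else 1 with hf
  have h1 : ∀ i : Fin d₁, ν (t i) = f (i : ℕ) := by
    intro i
    by_cases h' : (i : ℕ) < d₂
    · simp [ht, hf, h']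
    · simp [ht, hf, h']
  calc ∏ i : Fin d₁, ν (t i) = ∏ i : Fin d₁, f (i : ℕ) :=
        Finset.prod_congr rfl fun i _ => h1 i
    _ = ∏ n ∈ Finset.range d₁, f n := Fin.prod_univ_eq_prod_range f d₁
    _ = ∏ n ∈ Finset.range d₂, f n := by
        refine (Finset.prod_subset (Finset.range_subset_range.mpr hd) fun x hx hx' => ?_).symm
        simp only [Finset.mem_range] at hx hx'
        simp [hf, hx']
    _ = ∏ j : Fin d₂, f (j : ℕ) := (Fin.prod_univ_eq_prod_range f d₂).symm
    _ = ∏ j : Fin d₂, ν (s j) := by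
        refine Finset.prod_congr rfl fun j _ => ?_
        simp [hf, j.isLt]

lemma map_proj_SLM {d₁ d₂ : ℕ} (hd : d₂ ≤ d₁) (σ2 : ℝ) :
    Measure.map (proj hd) (SLM d₁ σ2) = SLM d₂ σ2 := by
  rw [SLM, SLM]
  rw [Measure.map_map (measurable_proj hd) (measurable_smulmap d₁)]
  have hcomp : proj hd ∘ (fun p : ℝ × (Fin d₁ → ℝ) => Real.sqrt p.1 • p.2)
      = (fun p : ℝ × (Fin d₂ → ℝ) => Real.sqrt p.1 • p.2)
        ∘ (Prod.map id (proj hd)) := by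
    funext p
    funext j
    simp [proj, Prod.map]
  rw [hcomp,
    ← Measure.map_map (measurable_smulmap d₂) (measurable_id.prodMap (measurable_proj hd)),
    ← Measure.map_prod_map _ _ measurable_id (measurable_proj hd),
    Measure.map_id, map_proj_gaussPi hd]

lemma integrable_of_bounded_prob {Ω : Type*} [MeasurableSpace Ω] (μ : Measure Ω)
    [IsProbabilityMeasure μ] {φ : Ω → ℝ} (hφ : Measurable φ)
    (hb : ∀ ω, φ ω ∈ Set.Icc (0 : ℝ) 1) : Integrable φ μ := by
  refine Integrable.mono' (integrable_const 1) hφ.aestronglyMeasurable ?_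
  filter_upwards with ω
  rw [Real.norm_eq_abs, abs_le]
  exact ⟨by linarith [(hb ω).1], (hb ω).2⟩

lemma integral_le_one_prob {Ω : Type*} [MeasurableSpace Ω] (μ : Measure Ω)
    [IsProbabilityMeasure μ] {φ : Ω → ℝ} (hφ : Measurable φ)
    (hb : ∀ ω, φ ω ∈ Set.Icc (0 : ℝ) 1) : (∫ ω, φ ω ∂μ) ≤ 1 := by
  have := integral_mono (integrable_of_bounded_prob μ hφ hb) (integrable_const 1)
    (fun ω => (hb ω).2)
  simpa using this

end TdcAux

end Aux

/-- For any `c > 0` and dimensions `d₁ ≥ d₂ ≥ 1`,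
`T_{d₁,c}(α) ≤ T_{d₂,c}(α)` for every `α ∈ [0,1]`. -/
theorem Tdc_anti_in_d (c : ℝ) (hc : 0 < c) (d₁ d₂ : ℕ) (hd₂ : 1 ≤ d₂) (hd : d₂ ≤ d₁) :
    ∀ α ∈ Set.Icc (0 : ℝ) 1, Tdc d₁ c α ≤ Tdc d₂ c α := by
  intro α hα
  obtain ⟨hα0, hα1⟩ := hα
  classical
  -- notation
  set v₁ : Fin d₁ → ℝ := fun j => if (j : ℕ) = 0 then c else 0 with hv₁
  set v₂ : Fin d₂ → ℝ := fun j => if (j : ℕ) = 0 then c else 0 with hv₂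
  set P₁ : Measure (Fin d₁ → ℝ) := SLM d₁ 1 with hP₁
  set P₂ : Measure (Fin d₂ → ℝ) := SLM d₂ 1 with hP₂
  set Q₁ : Measure (Fin d₁ → ℝ) := Measure.map (fun x => v₁ + x) P₁ with hQ₁
  set Q₂ : Measure (Fin d₂ → ℝ) := Measure.map (fun x => v₂ + x) P₂ with hQ₂
  have hQ₁prob : IsProbabilityMeasure Q₁ :=
    Measure.isProbabilityMeasure_map (TdcAux.measurable_shift v₁).aemeasurable
  have hQ₂prob : IsProbabilityMeasure Q₂ :=
    Measure.isProbabilityMeasure_map (TdcAux.measurable_shift v₂).aemeasurable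
  -- the two pushforward identities
  have hmapP : Measure.map (TdcAux.proj hd) P₁ = P₂ := TdcAux.map_proj_SLM hd 1
  have hmapQ : Measure.map (TdcAux.proj hd) Q₁ = Q₂ := by
    rw [hQ₁, Measure.map_map (TdcAux.measurable_proj hd) (TdcAux.measurable_shift v₁)]
    have hcomp : TdcAux.proj hd ∘ (fun x : Fin d₁ → ℝ => v₁ + x)
        = (fun x : Fin d₂ → ℝ => v₂ + x) ∘ TdcAux.proj hd := by
      funext x
      funext j
      simp [TdcAux.proj, hv₁, hv₂]
    rw [hcomp, ← Measure.map_map (TdcAux.measurable_shift v₂) (TdcAux.measurable_proj hd),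
      hmapP, hQ₂]
  -- the sets whose infima we compare
  have hTdc : ∀ (d : ℕ) (P Q : Measure (Fin d → ℝ)),
      tradeOff P Q α = sInf {b | ∃ φ : (Fin d → ℝ) → ℝ, Measurable φ ∧
        (∀ ω, φ ω ∈ Set.Icc (0 : ℝ) 1) ∧ (∫ ω, φ ω ∂P) ≤ α ∧ b = 1 - ∫ ω, φ ω ∂Q} :=
    fun d P Q => rfl
  set S₁ := {b | ∃ φ : (Fin d₁ → ℝ) → ℝ, Measurable φ ∧
    (∀ ω, φ ω ∈ Set.Icc (0 : ℝ) 1) ∧ (∫ ω, φ ω ∂P₁) ≤ α ∧ b = 1 - ∫ ω, φ ω ∂Q₁} with hS₁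
  set S₂ := {b | ∃ φ : (Fin d₂ → ℝ) → ℝ, Measurable φ ∧
    (∀ ω, φ ω ∈ Set.Icc (0 : ℝ) 1) ∧ (∫ ω, φ ω ∂P₂) ≤ α ∧ b = 1 - ∫ ω, φ ω ∂Q₂} with hS₂
  have hgoal₁ : Tdc d₁ c α = sInf S₁ := rfl
  have hgoal₂ : Tdc d₂ c α = sInf S₂ := rfl
  rw [hgoal₁, hgoal₂]
  -- S₁ is bounded below by 0
  have hbdd : BddBelow S₁ := by
    refine ⟨0, fun b hb => ?_⟩
    obtain ⟨φ, hφm, hφb, _, hbeq⟩ := hb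
    have := TdcAux.integral_le_one_prob Q₁ hφm hφb
    rw [hbeq]; linarith
  -- S₂ is nonempty
  have hne : S₂.Nonempty := by
    refine ⟨1, fun _ => 0, measurable_const, fun ω => ⟨le_refl 0, zero_le_one⟩, ?_, ?_⟩
    · simpa using hα0
    · simp
  -- S₂ ⊆ S₁
  have hsub : S₂ ⊆ S₁ := by
    rintro b ⟨φ, hφm, hφb, hφα, hbeq⟩
    refine ⟨φ ∘ TdcAux.proj hd, hφm.comp (TdcAux.measurable_proj hd),
      fun ω => hφb _, ?_, ?_⟩
    · have : (∫ ω, (φ ∘ TdcAux.proj hd) ω ∂P₁) = ∫ ω, φ ω ∂P₂ := by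
        rw [← hmapP, integral_map (TdcAux.measurable_proj hd).aemeasurable
          (hφm.aestronglyMeasurable.mono_measure le_rfl)]
        rfl
      rw [this]; exact hφα
    · have : (∫ ω, (φ ∘ TdcAux.proj hd) ω ∂Q₁) = ∫ ω, φ ω ∂Q₂ := by
        rw [← hmapQ, integral_map (TdcAux.measurable_proj hd).aemeasurable
          (hφm.aestronglyMeasurable.mono_measure le_rfl)]
        rfl
      rw [this]; exact hbeq
  exact csInf_le_csInf hbdd hne hsub
end

section
/- For every c > 0, the function β_c is strictly decreasing, convex and continuous on [0,1]; it satisfies β_c(α) ≤ 1 − α for all α ∈ [0,1]; and it is symmetric about the 45-degree line, i.e. β_c(α) = β_c^{-1}(α) for all α ∈ [0,1], where β_c^{-1}(α) := inf{t ∈ [0,1] : β_c(t) ≤ α}. -/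
open MeasureTheory ProbabilityTheory Real Filter Topology
open scoped NNReal ENNReal

namespace TOAux

variable {Ω : Type*} [MeasurableSpace Ω]

/-- The feasible set in the definition of the trade-off function. -/
def TSet (P Q : Measure Ω) (α : ℝ) : Set ℝ :=
  {b | ∃ φ : Ω → ℝ, Measurable φ ∧ (∀ ω, φ ω ∈ Set.Icc (0 : ℝ) 1) ∧
    (∫ ω, φ ω ∂P) ≤ α ∧ b = 1 - ∫ ω, φ ω ∂Q}

lemma tradeOff_eq (P Q : Measure Ω) (α : ℝ) : tradeOff P Q α = sInf (TSet P Q α) := rfl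

lemma integrable_test (P : Measure Ω) [IsProbabilityMeasure P] {φ : Ω → ℝ}
    (hm : Measurable φ) (hb : ∀ ω, φ ω ∈ Set.Icc (0 : ℝ) 1) : Integrable φ P := by
  refine (integrable_const (1 : ℝ)).mono' hm.aestronglyMeasurable ?_
  exact ae_of_all _ fun ω => by
    rw [Real.norm_eq_abs, abs_le]; exact ⟨by linarith [(hb ω).1], (hb ω).2⟩

lemma integral_test_nonneg (P : Measure Ω) {φ : Ω → ℝ}
    (hb : ∀ ω, φ ω ∈ Set.Icc (0 : ℝ) 1) : 0 ≤ ∫ ω, φ ω ∂P :=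
  integral_nonneg fun ω => (hb ω).1

lemma integral_test_le_one (P : Measure Ω) [IsProbabilityMeasure P] {φ : Ω → ℝ}
    (hm : Measurable φ) (hb : ∀ ω, φ ω ∈ Set.Icc (0 : ℝ) 1) : ∫ ω, φ ω ∂P ≤ 1 := by
  calc ∫ ω, φ ω ∂P ≤ ∫ _, (1 : ℝ) ∂P :=
        integral_mono (integrable_test P hm hb) (integrable_const 1) fun ω => (hb ω).2
    _ = 1 := by simp

lemma TSet_subset_Icc (P Q : Measure Ω) [IsProbabilityMeasure Q] (α : ℝ) :
    TSet P Q α ⊆ Set.Icc (0 : ℝ) 1 := by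
  rintro b ⟨φ, hm, hb, -, rfl⟩
  constructor
  · linarith [integral_test_le_one Q hm hb]
  · linarith [integral_test_nonneg Q hb]

lemma TSet_bddBelow (P Q : Measure Ω) [IsProbabilityMeasure Q] (α : ℝ) :
    BddBelow (TSet P Q α) :=
  ⟨0, fun b hb => (TSet_subset_Icc P Q α hb).1⟩

lemma const_mem_TSet (P Q : Measure Ω) [IsProbabilityMeasure P] [IsProbabilityMeasure Q]
    {α : ℝ} (hα : α ∈ Set.Icc (0 : ℝ) 1) : (1 - α) ∈ TSet P Q α := by
  refine ⟨fun _ => α, measurable_const, fun ω => hα, ?_, ?_⟩ <;> simp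

lemma TSet_nonempty (P Q : Measure Ω) [IsProbabilityMeasure P] [IsProbabilityMeasure Q]
    {α : ℝ} (hα : α ∈ Set.Icc (0 : ℝ) 1) : (TSet P Q α).Nonempty :=
  ⟨1 - α, const_mem_TSet P Q hα⟩

variable (P Q : Measure Ω) [IsProbabilityMeasure P] [IsProbabilityMeasure Q]

lemma tradeOff_le_of_mem {α b : ℝ} (hb : b ∈ TSet P Q α) : tradeOff P Q α ≤ b :=
  csInf_le (TSet_bddBelow P Q α) hb

lemma tradeOff_le_one_sub {α : ℝ} (hα : α ∈ Set.Icc (0 : ℝ) 1) : tradeOff P Q α ≤ 1 - α :=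
  tradeOff_le_of_mem P Q (const_mem_TSet P Q hα)

lemma tradeOff_nonneg {α : ℝ} (hα : α ∈ Set.Icc (0 : ℝ) 1) : 0 ≤ tradeOff P Q α :=
  le_csInf (TSet_nonempty P Q hα) fun b hb => (TSet_subset_Icc P Q α hb).1

lemma tradeOff_antitoneOn : AntitoneOn (tradeOff P Q) (Set.Icc (0 : ℝ) 1) := by
  intro x hx y hy hxy
  exact csInf_le_csInf (TSet_bddBelow P Q y) (TSet_nonempty P Q hx)
    fun b ⟨φ, hm, hb, hint, heq⟩ => ⟨φ, hm, hb, hint.trans hxy, heq⟩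

lemma tradeOff_one : tradeOff P Q 1 = 0 := by
  refine le_antisymm (tradeOff_le_of_mem P Q ⟨fun _ => 1, measurable_const,
    fun ω => by norm_num, by simp, by simp⟩) (tradeOff_nonneg P Q (by norm_num))

lemma tradeOff_zero (hQP : Q ≪ P) : tradeOff P Q 0 = 1 := by
  have hset : TSet P Q 0 = {1} := by
    ext b
    constructor
    · rintro ⟨φ, hm, hb, hint, rfl⟩
      have h0 : ∫ ω, φ ω ∂P = 0 := le_antisymm hint (integral_test_nonneg P hb)
      have hae : φ =ᵐ[P] 0 := by
        rw [integral_eq_zero_iff_of_nonneg (fun ω => (hb ω).1) (integrable_test P hm hb)] at h0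
        exact h0
      have haeQ : φ =ᵐ[Q] 0 := hQP.ae_eq hae
      have : ∫ ω, φ ω ∂Q = 0 := by
        rw [integral_congr_ae haeQ]; simp
      simp [Set.mem_singleton_iff, this]
    · rintro rfl
      exact ⟨fun _ => 0, measurable_const, fun ω => by norm_num, by simp, by simp⟩
  rw [tradeOff_eq, hset, csInf_singleton]

lemma tradeOff_convexOn : ConvexOn ℝ (Set.Icc (0 : ℝ) 1) (tradeOff P Q) := by
  refine ⟨convex_Icc _ _, ?_⟩
  intro x hx y hy a b ha hb hab
  refine le_of_forall_pos_le_add fun ε hε => ?_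
  obtain ⟨b₁, hb₁, hb₁lt⟩ := Real.lt_sInf_add_pos (TSet_nonempty P Q hx) hε
  obtain ⟨b₂, hb₂, hb₂lt⟩ := Real.lt_sInf_add_pos (TSet_nonempty P Q hy) hε
  obtain ⟨φ₁, hm₁, hbd₁, hint₁, rfl⟩ := hb₁
  obtain ⟨φ₂, hm₂, hbd₂, hint₂, rfl⟩ := hb₂
  have hi₁P := integrable_test P hm₁ hbd₁
  have hi₂P := integrable_test P hm₂ hbd₂
  have hi₁Q := integrable_test Q hm₁ hbd₁
  have hi₂Q := integrable_test Q hm₂ hbd₂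
  have hmem : a * (1 - ∫ ω, φ₁ ω ∂Q) + b * (1 - ∫ ω, φ₂ ω ∂Q) ∈ TSet P Q (a * x + b * y) := by
    refine ⟨fun ω => a * φ₁ ω + b * φ₂ ω, by fun_prop, ?_, ?_, ?_⟩
    · intro ω
      constructor
      · have := (hbd₁ ω).1; have := (hbd₂ ω).1; positivity
      · have h1 := (hbd₁ ω).2; have h2 := (hbd₂ ω).2
        show a * φ₁ ω + b * φ₂ ω ≤ 1
        nlinarith
    · rw [integral_add (hi₁P.const_mul a) (hi₂P.const_mul b), integral_const_mul,
        integral_const_mul]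
      have : a * ∫ ω, φ₁ ω ∂P ≤ a * x := mul_le_mul_of_nonneg_left hint₁ ha
      have : b * ∫ ω, φ₂ ω ∂P ≤ b * y := mul_le_mul_of_nonneg_left hint₂ hb
      linarith
    · rw [integral_add (hi₁Q.const_mul a) (hi₂Q.const_mul b), integral_const_mul,
        integral_const_mul]
      linear_combination hab
  have h1 := tradeOff_le_of_mem P Q hmem
  have h2 : a * (1 - ∫ ω, φ₁ ω ∂Q) ≤ a * (tradeOff P Q x + ε) :=
    mul_le_mul_of_nonneg_left hb₁lt.le ha
  have h3 : b * (1 - ∫ ω, φ₂ ω ∂Q) ≤ b * (tradeOff P Q y + ε) :=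
    mul_le_mul_of_nonneg_left hb₂lt.le hb
  calc tradeOff P Q (a * x + b * y) ≤ a * (1 - ∫ ω, φ₁ ω ∂Q) + b * (1 - ∫ ω, φ₂ ω ∂Q) := h1
    _ ≤ a * (tradeOff P Q x + ε) + b * (tradeOff P Q y + ε) := add_le_add h2 h3
    _ = a * tradeOff P Q x + b * tradeOff P Q y + ε := by linear_combination ε * hab


lemma unif_ac (P Q : Measure Ω) [IsProbabilityMeasure P] [IsProbabilityMeasure Q]
    (hPQ : P ≪ Q) {η : ℝ} (hη : 0 < η) :
    ∃ ε > 0, ∀ φ : Ω → ℝ, Measurable φ → (∀ ω, φ ω ∈ Set.Icc (0 : ℝ) 1) →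
      (∫ ω, φ ω ∂Q) ≤ ε → (∫ ω, φ ω ∂P) ≤ η := by
  set g : Ω → ℝ≥0∞ := P.rnDeriv Q with hg
  have hgm : Measurable g := Measure.measurable_rnDeriv P Q
  have hPd : Q.withDensity g = P := Measure.withDensity_rnDeriv_eq P Q hPQ
  -- the sets where the density is large
  set S : ℕ → Set Ω := fun n => {ω | (n : ℝ≥0∞) < g ω} with hS
  have hSm : ∀ n, MeasurableSet (S n) := fun n => hgm measurableSet_Ioi
  have hanti : Antitone S := by
    intro m n hmn ω hω
    exact lt_of_le_of_lt (show ((m:ℕ):ℝ≥0∞) ≤ ((n:ℕ):ℝ≥0∞) by exact_mod_cast hmn) hω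
  have hInter : ⋂ n, S n = {ω | g ω = ∞} := by
    ext ω
    simp only [Set.mem_iInter, Set.mem_setOf_eq, hS]
    constructor
    · intro h
      by_contra htop
      obtain ⟨n, hn⟩ := ENNReal.exists_nat_gt htop
      exact absurd (h n) (not_lt.2 hn.le)
    · intro h n; simp [h]
  have hPtop : P {ω | g ω = ∞} = 0 := by
    refine hPQ ?_
    have := Measure.rnDeriv_ne_top P Q
    rw [ae_iff] at this
    simpa using this
  have htend : Tendsto (fun n => P (S n)) atTop (𝓝 0) := by
    have := tendsto_measure_iInter_atTop (μ := P) (fun n => (hSm n).nullMeasurableSet) hanti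
      ⟨0, measure_ne_top _ _⟩
    rwa [hInter, hPtop] at this
  have hev : ∀ᶠ n in atTop, P (S n) < ENNReal.ofReal (η / 2) := by
    exact htend.eventually_lt_const (by positivity)
  obtain ⟨n, hn⟩ := hev.exists
  refine ⟨η / (2 * (n + 1)), by positivity, fun φ hm hb hint => ?_⟩
  set ε := η / (2 * (n + 1)) with hε
  have hεnn : 0 ≤ ε := by positivity
  have hφint : Integrable φ Q := by
    refine (integrable_const (1 : ℝ)).mono' hm.aestronglyMeasurable ?_
    exact ae_of_all _ fun ω => by
      rw [Real.norm_eq_abs, abs_le]; exact ⟨by linarith [(hb ω).1], (hb ω).2⟩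
  have hφnn : 0 ≤ᵐ[Q] φ := ae_of_all _ fun ω => (hb ω).1
  have hφnnP : 0 ≤ᵐ[P] φ := ae_of_all _ fun ω => (hb ω).1
  -- lintegral computations
  have key : ∫⁻ ω, ENNReal.ofReal (φ ω) ∂P ≤ ENNReal.ofReal η := by
    have h1 : ∫⁻ ω, ENNReal.ofReal (φ ω) ∂P
        = ∫⁻ ω, (g * fun ω => ENNReal.ofReal (φ ω)) ω ∂Q := by
      rw [← hPd, lintegral_withDensity_eq_lintegral_mul Q hgm (by fun_prop)]
    have h2 : ∀ ω, (g * fun ω => ENNReal.ofReal (φ ω)) ω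
        ≤ (n : ℝ≥0∞) * ENNReal.ofReal (φ ω) + (S n).indicator g ω := by
      intro ω
      by_cases hω : ω ∈ S n
      · calc g ω * ENNReal.ofReal (φ ω) ≤ g ω * 1 := by
              gcongr
              exact ENNReal.ofReal_le_one.2 (hb ω).2
          _ = g ω := mul_one _
          _ ≤ _ := by rw [Set.indicator_of_mem hω]; exact le_add_self
      · have : g ω ≤ (n : ℝ≥0∞) := not_lt.1 hω
        calc g ω * ENNReal.ofReal (φ ω) ≤ (n : ℝ≥0∞) * ENNReal.ofReal (φ ω) := by gcongr
          _ ≤ _ := by rw [Set.indicator_of_notMem hω]; simp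
    have h3 : ∫⁻ ω, ENNReal.ofReal (φ ω) ∂Q ≤ ENNReal.ofReal ε := by
      rw [← ofReal_integral_eq_lintegral_ofReal hφint hφnn]
      exact ENNReal.ofReal_le_ofReal hint
    have h4 : ∫⁻ ω, (S n).indicator g ω ∂Q = P (S n) := by
      rw [lintegral_indicator (hSm n), ← withDensity_apply g (hSm n), hPd]
    calc ∫⁻ ω, ENNReal.ofReal (φ ω) ∂P
        = ∫⁻ ω, (g * fun ω => ENNReal.ofReal (φ ω)) ω ∂Q := h1
      _ ≤ ∫⁻ ω, ((n : ℝ≥0∞) * ENNReal.ofReal (φ ω) + (S n).indicator g ω) ∂Q :=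
          lintegral_mono h2
      _ = (n : ℝ≥0∞) * ∫⁻ ω, ENNReal.ofReal (φ ω) ∂Q + ∫⁻ ω, (S n).indicator g ω ∂Q := by
          rw [lintegral_add_left (by fun_prop), lintegral_const_mul _ (by fun_prop)]
      _ ≤ (n : ℝ≥0∞) * ENNReal.ofReal ε + ENNReal.ofReal (η / 2) :=
          add_le_add (by gcongr) (le_of_eq_of_le h4 hn.le)
      _ ≤ ENNReal.ofReal (η / 2) + ENNReal.ofReal (η / 2) := by
          gcongr
          have : (n : ℝ≥0∞) * ENNReal.ofReal ε = ENNReal.ofReal (n * ε) := by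
            rw [ENNReal.ofReal_mul (by positivity)]
            simp
          rw [this]
          refine ENNReal.ofReal_le_ofReal ?_
          rw [hε, ← mul_div_assoc, div_le_div_iff₀ (by positivity) (by norm_num : (0:ℝ) < 2)]
          nlinarith [Nat.cast_nonneg (α := ℝ) n, hη.le]
      _ = ENNReal.ofReal η := by
          rw [← ENNReal.ofReal_add (by positivity) (by positivity)]
          norm_num
  have : ∫ ω, φ ω ∂P = (∫⁻ ω, ENNReal.ofReal (φ ω) ∂P).toReal := by
    rw [integral_eq_lintegral_of_nonneg_ae hφnnP hm.aestronglyMeasurable]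
  rw [this]
  calc (∫⁻ ω, ENNReal.ofReal (φ ω) ∂P).toReal ≤ (ENNReal.ofReal η).toReal := by
        exact ENNReal.toReal_mono ENNReal.ofReal_ne_top key
    _ = η := ENNReal.toReal_ofReal hη.le

end TOAux

namespace TOAux
variable {Ω : Type*} [MeasurableSpace Ω]
variable (P Q : Measure Ω) [IsProbabilityMeasure P] [IsProbabilityMeasure Q]

lemma tradeOff_pos (hPQ : P ≪ Q) {α : ℝ} (hα : α ∈ Set.Icc (0 : ℝ) 1) (hα1 : α < 1) :
    0 < tradeOff P Q α := by
  obtain ⟨ε, hε, hkey⟩ := unif_ac P Q hPQ (show (0:ℝ) < (1 - α) / 2 by linarith)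
  have hmin : 0 < min ε ((1 - α) / 4) := lt_min hε (by linarith)
  refine lt_of_lt_of_le hmin (le_csInf (TSet_nonempty P Q hα) ?_)
  rintro b ⟨φ, hm, hb, hint, rfl⟩
  by_contra hlt
  push_neg at hlt
  set ψ : Ω → ℝ := fun ω => 1 - φ ω with hψ
  have hψm : Measurable ψ := by fun_prop
  have hψb : ∀ ω, ψ ω ∈ Set.Icc (0 : ℝ) 1 := fun ω =>
    ⟨show (0:ℝ) ≤ 1 - φ ω by linarith [(hb ω).2],
     show (1:ℝ) - φ ω ≤ 1 by linarith [(hb ω).1]⟩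
  have hψQ : ∫ ω, ψ ω ∂Q = 1 - ∫ ω, φ ω ∂Q := by
    rw [hψ]
    rw [integral_sub (integrable_const 1) (integrable_test Q hm hb)]
    simp
  have hψP : ∫ ω, ψ ω ∂P = 1 - ∫ ω, φ ω ∂P := by
    rw [hψ]
    rw [integral_sub (integrable_const 1) (integrable_test P hm hb)]
    simp
  have h1 : ∫ ω, ψ ω ∂Q ≤ ε := by
    rw [hψQ]
    calc 1 - ∫ ω, φ ω ∂Q ≤ min ε ((1 - α) / 4) := hlt.le
      _ ≤ ε := min_le_left _ _
  have h2 := hkey ψ hψm hψb h1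
  rw [hψP] at h2
  linarith

lemma tradeOff_near_zero (hQP : Q ≪ P) {η : ℝ} (hη : 0 < η) :
    ∃ ε > 0, ∀ α : ℝ, α ∈ Set.Icc (0:ℝ) 1 → α ≤ ε → 1 - η ≤ tradeOff P Q α := by
  obtain ⟨ε, hε, hkey⟩ := unif_ac Q P hQP hη
  refine ⟨ε, hε, fun α hα hαε => ?_⟩
  refine le_csInf (TSet_nonempty P Q hα) ?_
  rintro b ⟨φ, hm, hb, hint, rfl⟩
  have := hkey φ hm hb (hint.trans hαε)
  linarith

lemma tradeOff_strictAntiOn (hPQ : P ≪ Q) :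
    StrictAntiOn (tradeOff P Q) (Set.Icc (0 : ℝ) 1) := by
  intro x hx y hy hxy
  set δ := y - x with hδ
  have hδ0 : 0 < δ := by simp [hδ]; linarith
  have hδ1 : δ ≤ 1 := by rw [hδ]; linarith [hx.1, hy.2]
  have hxlt1 : x < 1 := lt_of_lt_of_le hxy hy.2
  have hpos : 0 < tradeOff P Q x := tradeOff_pos P Q hPQ hx hxlt1
  -- main claim: tradeOff P Q y ≤ (1 - δ) * b for all b ∈ TSet P Q x
  have hclaim : ∀ b ∈ TSet P Q x, tradeOff P Q y ≤ (1 - δ) * b := by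
    rintro b ⟨φ, hm, hb, hint, rfl⟩
    set a := ∫ ω, φ ω ∂P with ha
    have ha0 : 0 ≤ a := integral_test_nonneg P hb
    have ha1 : a < 1 := lt_of_le_of_lt hint hxlt1
    set t := (y - a) / (1 - a) with ht
    have ht0 : 0 ≤ t := div_nonneg (by linarith) (by linarith)
    have ht1 : t ≤ 1 := by
      rw [ht, div_le_one (by linarith)]
      linarith [hy.2]
    have htδ : δ ≤ t := by
      rw [ht, le_div_iff₀ (by linarith)]
      nlinarith [hint]
    set φ' : Ω → ℝ := fun ω => φ ω + t * (1 - φ ω) with hφ'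
    have hm' : Measurable φ' := by fun_prop
    have hb' : ∀ ω, φ' ω ∈ Set.Icc (0 : ℝ) 1 := by
      intro ω
      have h1 := (hb ω).1; have h2 := (hb ω).2
      constructor
      · show 0 ≤ φ ω + t * (1 - φ ω); nlinarith
      · show φ ω + t * (1 - φ ω) ≤ 1; nlinarith
    have hrw : (fun ω => φ ω + t * (1 - φ ω)) = fun ω => (1 - t) * φ ω + t := by
      funext ω; ring
    have hintP' : ∫ ω, φ' ω ∂P = a + t * (1 - a) := by
      rw [hφ', hrw, integral_add ((integrable_test P hm hb).const_mul _) (integrable_const t),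
        integral_const_mul, integral_const]
      simp only [probReal_univ, one_smul]
      rw [← ha]; ring
    have hintQ' : ∫ ω, φ' ω ∂Q = (∫ ω, φ ω ∂Q) + t * (1 - ∫ ω, φ ω ∂Q) := by
      rw [hφ', hrw, integral_add ((integrable_test Q hm hb).const_mul _) (integrable_const t),
        integral_const_mul, integral_const]
      simp only [probReal_univ, one_smul]
      ring
    have hmem : (1 - t) * (1 - ∫ ω, φ ω ∂Q) ∈ TSet P Q y := by
      refine ⟨φ', hm', hb', ?_, ?_⟩
      · rw [hintP']
        have htmul : t * (1 - a) = y - a := by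
          rw [ht, div_mul_cancel₀]
          linarith
        linarith [htmul]
      · rw [hintQ']; ring
    refine (tradeOff_le_of_mem P Q hmem).trans ?_
    have hbnn : 0 ≤ 1 - ∫ ω, φ ω ∂Q := by
      linarith [integral_test_le_one Q hm hb]
    nlinarith
  by_cases h1δ : 1 - δ ≤ 0
  · -- then tradeOff y ≤ 0 < tradeOff x
    obtain ⟨b, hbmem⟩ := TSet_nonempty P Q hx
    have hb0 : 0 ≤ b := (TSet_subset_Icc P Q x hbmem).1
    have := hclaim b hbmem
    have hy0 : tradeOff P Q y ≤ 0 := this.trans (by nlinarith)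
    linarith
  · push_neg at h1δ
    have : tradeOff P Q y ≤ (1 - δ) * tradeOff P Q x := by
      rw [← div_le_iff₀' h1δ]
      refine le_csInf (TSet_nonempty P Q hx) fun b hbmem => ?_
      rw [div_le_iff₀' h1δ]
      exact hclaim b hbmem
    nlinarith

lemma tradeOff_continuousOn (hPQ : P ≪ Q) (hQP : Q ≪ P) :
    ContinuousOn (tradeOff P Q) (Set.Icc (0 : ℝ) 1) := by
  have hconv := tradeOff_convexOn P Q
  have hIoo : ContinuousOn (tradeOff P Q) (Set.Ioo (0 : ℝ) 1) :=
    (hconv.subset Set.Ioo_subset_Icc_self (convex_Ioo _ _)).continuousOn isOpen_Ioo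
  intro x hx
  rcases eq_or_lt_of_le hx.1 with h0 | h0
  · -- x = 0
    rw [← h0]
    rw [Metric.continuousWithinAt_iff]
    intro ε hε
    obtain ⟨ε', hε', hkey⟩ := tradeOff_near_zero P Q hQP (show (0:ℝ) < ε/2 by linarith)
    refine ⟨min ε' (ε/2), lt_min hε' (by linarith), fun y hy hdist => ?_⟩
    have hy0 : (0:ℝ) ≤ y := hy.1
    have hylt : y ≤ ε' := by
      simp only [Real.dist_eq, sub_zero] at hdist
      have := (abs_lt.1 hdist).2
      exact le_of_lt (lt_of_lt_of_le this (min_le_left _ _))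
    have h1 : 1 - ε/2 ≤ tradeOff P Q y := hkey y hy hylt
    have h2 : tradeOff P Q y ≤ 1 := (tradeOff_le_one_sub P Q hy).trans (by linarith)
    rw [tradeOff_zero P Q hQP, Real.dist_eq, abs_lt]
    constructor <;> linarith
  rcases eq_or_lt_of_le hx.2 with h1 | h1
  · -- x = 1
    subst h1
    rw [Metric.continuousWithinAt_iff]
    intro ε hε
    refine ⟨ε, hε, fun y hy hdist => ?_⟩
    have hy0 : 0 ≤ tradeOff P Q y := tradeOff_nonneg P Q hy
    have hy1 : tradeOff P Q y ≤ 1 - y := tradeOff_le_one_sub P Q hy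
    rw [tradeOff_one P Q, Real.dist_eq, sub_zero, abs_of_nonneg hy0]
    rw [Real.dist_eq, abs_sub_lt_iff] at hdist
    linarith [hdist.2]
  · -- x interior
    exact (hIoo.continuousAt (Ioo_mem_nhds h0 h1)).continuousWithinAt

end TOAux

namespace TOAux
variable {Ω : Type*} [MeasurableSpace Ω]

lemma TSet_subset_swap (P Q : Measure Ω) {e : Ω → Ω} (he : Measurable e)
    (hP : P.map e = Q) (hQ : Q.map e = P) (α : ℝ) :
    TSet P Q α ⊆ TSet Q P α := by
  rintro b ⟨φ, hm, hb, hint, rfl⟩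
  refine ⟨φ ∘ e, hm.comp he, fun ω => hb (e ω), ?_, ?_⟩
  · have h1 : ∫ y, φ y ∂(Q.map e) = ∫ x, φ (e x) ∂Q :=
      integral_map he.aemeasurable (by rw [hQ]; exact hm.aestronglyMeasurable)
    rw [hQ] at h1
    calc ∫ ω, (φ ∘ e) ω ∂Q = ∫ ω, φ ω ∂P := h1.symm
      _ ≤ α := hint
  · have h2 : ∫ y, φ y ∂(P.map e) = ∫ x, φ (e x) ∂P :=
      integral_map he.aemeasurable (by rw [hP]; exact hm.aestronglyMeasurable)
    rw [hP] at h2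
    have : ∫ ω, (φ ∘ e) ω ∂P = ∫ ω, φ ω ∂Q := by
      simpa [Function.comp] using h2.symm
    rw [this]

lemma tradeOff_swap (P Q : Measure Ω) {e : Ω → Ω} (he : Measurable e)
    (hP : P.map e = Q) (hQ : Q.map e = P) (α : ℝ) :
    tradeOff Q P α = tradeOff P Q α := by
  rw [tradeOff_eq, tradeOff_eq]
  congr 1
  exact Set.Subset.antisymm (TSet_subset_swap Q P he hQ hP α)
    (TSet_subset_swap P Q he hP hQ α)

variable (P Q : Measure Ω) [IsProbabilityMeasure P] [IsProbabilityMeasure Q]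

lemma tradeOff_swap_le {α : ℝ} {b : ℝ} (hb : b ∈ TSet P Q α) : tradeOff Q P b ≤ α := by
  obtain ⟨φ, hm, hbd, hint, rfl⟩ := hb
  set ψ : Ω → ℝ := fun ω => 1 - φ ω with hψ
  have hψm : Measurable ψ := by fun_prop
  have hψb : ∀ ω, ψ ω ∈ Set.Icc (0 : ℝ) 1 := fun ω =>
    ⟨show (0:ℝ) ≤ 1 - φ ω by linarith [(hbd ω).2],
     show (1:ℝ) - φ ω ≤ 1 by linarith [(hbd ω).1]⟩
  have hψQ : ∫ ω, ψ ω ∂Q = 1 - ∫ ω, φ ω ∂Q := by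
    rw [hψ, integral_sub (integrable_const 1) (integrable_test Q hm hbd)]; simp
  have hψP : ∫ ω, ψ ω ∂P = 1 - ∫ ω, φ ω ∂P := by
    rw [hψ, integral_sub (integrable_const 1) (integrable_test P hm hbd)]; simp
  have hmem : (1 - ∫ ω, ψ ω ∂P) ∈ TSet Q P (1 - ∫ ω, φ ω ∂Q) :=
    ⟨ψ, hψm, hψb, le_of_eq hψQ, rfl⟩
  calc tradeOff Q P (1 - ∫ ω, φ ω ∂Q) ≤ 1 - ∫ ω, ψ ω ∂P := tradeOff_le_of_mem Q P hmem
    _ = ∫ ω, φ ω ∂P := by rw [hψP]; ring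
    _ ≤ α := hint

lemma tradeOff_mem_Icc {α : ℝ} (hα : α ∈ Set.Icc (0:ℝ) 1) :
    tradeOff P Q α ∈ Set.Icc (0:ℝ) 1 :=
  ⟨tradeOff_nonneg P Q hα, (tradeOff_le_one_sub P Q hα).trans (by linarith [hα.1])⟩

lemma tradeOff_comp_self (hPQ : P ≪ Q) (hQP : Q ≪ P)
    (hswap : ∀ α, tradeOff Q P α = tradeOff P Q α) {α : ℝ} (hα : α ∈ Set.Icc (0:ℝ) 1) :
    tradeOff P Q (tradeOff P Q α) = α := by
  have hle : ∀ γ ∈ Set.Icc (0:ℝ) 1, tradeOff P Q (tradeOff P Q γ) ≤ γ := by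
    intro γ hγ
    obtain ⟨u, -, hu, hmemu⟩ := exists_seq_tendsto_sInf (TSet_nonempty P Q hγ)
      (TSet_bddBelow P Q γ)
    have htend' : Tendsto u atTop (𝓝[Set.Icc (0:ℝ) 1] (tradeOff P Q γ)) := by
      refine tendsto_nhdsWithin_of_tendsto_nhds_of_eventually_within u hu ?_
      exact Eventually.of_forall fun n => TSet_subset_Icc P Q γ (hmemu n)
    have hc : ContinuousWithinAt (tradeOff P Q) (Set.Icc (0:ℝ) 1) (tradeOff P Q γ) :=
      tradeOff_continuousOn P Q hPQ hQP _ (tradeOff_mem_Icc P Q hγ)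
    have hcomp : Tendsto (fun n => tradeOff P Q (u n)) atTop
        (𝓝 (tradeOff P Q (tradeOff P Q γ))) := hc.tendsto.comp htend'
    refine le_of_tendsto hcomp (Eventually.of_forall fun n => ?_)
    rw [← hswap]
    exact tradeOff_swap_le P Q (hmemu n)
  refine le_antisymm (hle α hα) ?_
  by_contra hlt
  push_neg at hlt
  have hγ : tradeOff P Q α ∈ Set.Icc (0:ℝ) 1 := tradeOff_mem_Icc P Q hα
  have h2 := hle _ hγ
  have h3 : tradeOff P Q α < tradeOff P Q (tradeOff P Q (tradeOff P Q α)) :=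
    tradeOff_strictAntiOn P Q hPQ
      (tradeOff_mem_Icc P Q hγ) hα hlt
  linarith

lemma tradeOff_inverse (hPQ : P ≪ Q) (hQP : Q ≪ P)
    (hswap : ∀ α, tradeOff Q P α = tradeOff P Q α) {α : ℝ} (hα : α ∈ Set.Icc (0:ℝ) 1) :
    tradeOff P Q α = sInf {t ∈ Set.Icc (0:ℝ) 1 | tradeOff P Q t ≤ α} := by
  have hset : {t ∈ Set.Icc (0:ℝ) 1 | tradeOff P Q t ≤ α} = Set.Icc (tradeOff P Q α) 1 := by
    ext t
    simp only [Set.mem_setOf_eq, Set.mem_Icc]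
    constructor
    · rintro ⟨⟨ht0, ht1⟩, hle⟩
      refine ⟨?_, ht1⟩
      by_contra hlt
      push_neg at hlt
      have := tradeOff_strictAntiOn P Q hPQ ⟨ht0, ht1⟩ (tradeOff_mem_Icc P Q hα) hlt
      rw [tradeOff_comp_self P Q hPQ hQP hswap hα] at this
      linarith
    · rintro ⟨htl, ht1⟩
      have ht0 : (0:ℝ) ≤ t := le_trans (tradeOff_mem_Icc P Q hα).1 htl
      refine ⟨⟨ht0, ht1⟩, ?_⟩
      have : tradeOff P Q t ≤ tradeOff P Q (tradeOff P Q α) :=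
        (tradeOff_strictAntiOn P Q hPQ).antitoneOn (tradeOff_mem_Icc P Q hα) ⟨ht0, ht1⟩ htl
      rwa [tradeOff_comp_self P Q hPQ hQP hswap hα] at this
  rw [hset, csInf_Icc (tradeOff_mem_Icc P Q hα).2]

end TOAux

namespace TOConc

lemma expOne_univ : expOne Set.univ = 1 := by
  rw [expOne, withDensity_apply _ MeasurableSet.univ, setLIntegral_univ]
  have hint : IntegrableOn (fun w : ℝ => Real.exp (-w)) (Set.Ioi 0) := by
    simpa using exp_neg_integrableOn_Ioi 0 one_pos
  rw [← ofReal_integral_eq_lintegral_ofReal hint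
    (ae_of_all _ fun w => (Real.exp_pos _).le)]
  rw [integral_exp_neg_Ioi_zero]
  simp

instance : IsProbabilityMeasure expOne := ⟨expOne_univ⟩

lemma measurable_f : Measurable (fun p : ℝ × ℝ => (Real.sqrt p.1 * p.2, p.1)) := by fun_prop

lemma measurable_g (c : ℝ) :
    Measurable (fun p : ℝ × ℝ => (c + Real.sqrt p.1 * p.2, p.1)) := by fun_prop

lemma measurable_r (c : ℝ) : Measurable (fun q : ℝ × ℝ => (c - q.1, q.2)) := by fun_prop

instance : IsProbabilityMeasure pairP :=
  Measure.isProbabilityMeasure_map measurable_f.aemeasurable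

instance (c : ℝ) : IsProbabilityMeasure (pairQ c) :=
  Measure.isProbabilityMeasure_map (measurable_g c).aemeasurable

lemma gauss_map_neg : (gaussianReal 0 1).map (fun z : ℝ => -z) = gaussianReal 0 1 := by
  have h : (fun z : ℝ => -z) = (fun z : ℝ => (-1 : ℝ) * z) := by funext z; ring
  rw [h, gaussianReal_map_const_mul (-1 : ℝ)]
  have h2 : (NNReal.mk ((-1:ℝ)^2) (sq_nonneg _) : ℝ≥0) * 1 = 1 := by ext; norm_num
  rw [h2]
  norm_num

lemma map_n : (expOne.prod (gaussianReal 0 1)).map (fun p : ℝ × ℝ => (p.1, -p.2))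
    = expOne.prod (gaussianReal 0 1) := by
  have h : (fun p : ℝ × ℝ => (p.1, -p.2)) = Prod.map (id : ℝ → ℝ) (fun z : ℝ => -z) := rfl
  rw [h, ← Measure.map_prod_map _ _ measurable_id (by fun_prop), Measure.map_id, gauss_map_neg]

lemma map_r_pairP (c : ℝ) : pairP.map (fun q : ℝ × ℝ => (c - q.1, q.2)) = pairQ c := by
  rw [pairP, Measure.map_map (measurable_r c) measurable_f]
  have h : ((fun q : ℝ × ℝ => (c - q.1, q.2)) ∘ (fun p : ℝ × ℝ => (Real.sqrt p.1 * p.2, p.1)))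
      = (fun p : ℝ × ℝ => (c + Real.sqrt p.1 * p.2, p.1)) ∘ (fun p : ℝ × ℝ => (p.1, -p.2)) := by
    funext p
    simp only [Function.comp_apply, Prod.mk.injEq]
    exact ⟨by ring, trivial⟩
  rw [h, ← Measure.map_map (measurable_g c) (by fun_prop : Measurable fun p : ℝ × ℝ => (p.1, -p.2)),
    map_n, pairQ]

lemma map_r_pairQ (c : ℝ) : (pairQ c).map (fun q : ℝ × ℝ => (c - q.1, q.2)) = pairP := by
  rw [pairQ, Measure.map_map (measurable_r c) (measurable_g c)]
  have h : ((fun q : ℝ × ℝ => (c - q.1, q.2)) ∘ (fun p : ℝ × ℝ => (c + Real.sqrt p.1 * p.2, p.1)))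
      = (fun p : ℝ × ℝ => (Real.sqrt p.1 * p.2, p.1)) ∘ (fun p : ℝ × ℝ => (p.1, -p.2)) := by
    funext p
    simp only [Function.comp_apply, Prod.mk.injEq]
    exact ⟨by ring, trivial⟩
  rw [h, ← Measure.map_map measurable_f (by fun_prop : Measurable fun p : ℝ × ℝ => (p.1, -p.2)),
    map_n, pairP]

end TOConc

namespace TOConc

lemma expOne_ae_pos : ∀ᵐ w ∂expOne, 0 < w := by
  rw [ae_iff, expOne]
  have hms : MeasurableSet {w : ℝ | ¬ 0 < w} := by
    have h : {w : ℝ | ¬ 0 < w} = Set.Iic 0 := by ext w; simp [not_lt]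
    rw [h]; exact measurableSet_Iic
  rw [withDensity_apply _ hms, Measure.restrict_restrict hms]
  have h : {w : ℝ | ¬ 0 < w} ∩ Set.Ioi 0 = ∅ := by
    ext w; simp only [Set.mem_inter_iff, Set.mem_setOf_eq, Set.mem_Ioi, not_lt,
      Set.mem_empty_iff_false, iff_false, not_and]
    exact fun h => h
  rw [h, Measure.restrict_empty, lintegral_zero_measure]

lemma gauss_map_affine (c s : ℝ) :
    (gaussianReal 0 1).map (fun z => c + s * z)
      = gaussianReal c (NNReal.mk (s ^ 2) (sq_nonneg _) * 1) := by
  have h1 : (fun z : ℝ => c + s * z) = (· + c) ∘ (s * ·) := by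
    funext z; simp [add_comm]
  rw [h1, ← Measure.map_map (measurable_add_const c) (measurable_const_mul s),
    gaussianReal_map_const_mul s, gaussianReal_map_add_const c]
  norm_num

lemma pairP_ac (c : ℝ) : pairP ≪ pairQ c := by
  refine Measure.AbsolutelyContinuous.mk fun A hA hQA => ?_
  rw [pairQ, Measure.map_apply (measurable_g c) hA,
    Measure.prod_apply ((measurable_g c) hA)] at hQA
  rw [pairP, Measure.map_apply measurable_f hA, Measure.prod_apply (measurable_f hA)]
  have hmeasQ : Measurable fun w => (gaussianReal 0 1)
      (Prod.mk w ⁻¹' ((fun p : ℝ × ℝ => (c + Real.sqrt p.1 * p.2, p.1)) ⁻¹' A)) :=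
    measurable_measure_prodMk_left ((measurable_g c) hA)
  have hmeasP : Measurable fun w => (gaussianReal 0 1)
      (Prod.mk w ⁻¹' ((fun p : ℝ × ℝ => (Real.sqrt p.1 * p.2, p.1)) ⁻¹' A)) :=
    measurable_measure_prodMk_left (measurable_f hA)
  rw [lintegral_eq_zero_iff hmeasP]
  filter_upwards [(lintegral_eq_zero_iff hmeasQ).1 hQA, expOne_ae_pos] with w hw0 hwpos
  have hBm : MeasurableSet ((fun x : ℝ => (x, w)) ⁻¹' A) :=
    (measurable_id.prodMk measurable_const) hA
  have hvne : (NNReal.mk ((Real.sqrt w) ^ 2) (sq_nonneg _) * 1 : ℝ≥0) ≠ 0 := by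
    intro hcon
    apply_fun (fun x : ℝ≥0 => (x : ℝ)) at hcon
    simp only [NNReal.coe_mul, NNReal.coe_one, NNReal.coe_zero, mul_one, NNReal.coe_mk] at hcon
    nlinarith [Real.sqrt_pos.2 hwpos]
  have h1 : (gaussianReal c (NNReal.mk ((Real.sqrt w) ^ 2) (sq_nonneg _) * 1)) ((fun x : ℝ => (x, w)) ⁻¹' A) = 0 := by
    rw [← gauss_map_affine c (Real.sqrt w), Measure.map_apply (by fun_prop) hBm]
    exact hw0
  have h2 : volume ((fun x : ℝ => (x, w)) ⁻¹' A) = 0 :=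
    gaussianReal_absolutelyContinuous' c hvne h1
  have h3 : (gaussianReal 0 (NNReal.mk ((Real.sqrt w) ^ 2) (sq_nonneg _) * 1)) ((fun x : ℝ => (x, w)) ⁻¹' A) = 0 :=
    gaussianReal_absolutelyContinuous 0 hvne h2
  show (gaussianReal 0 1) ((fun z : ℝ => Real.sqrt w * z) ⁻¹' ((fun x : ℝ => (x, w)) ⁻¹' A)) = 0
  rw [← Measure.map_apply (by fun_prop : Measurable fun z : ℝ => Real.sqrt w * z) hBm]
  have h4 : (gaussianReal 0 1).map (fun z : ℝ => Real.sqrt w * z)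
      = gaussianReal 0 (NNReal.mk ((Real.sqrt w) ^ 2) (sq_nonneg _) * 1) := by
    rw [gaussianReal_map_const_mul, mul_zero]
  rw [h4]
  exact h3

lemma pairQ_ac (c : ℝ) : pairQ c ≪ pairP := by
  refine Measure.AbsolutelyContinuous.mk fun A hA hPA => ?_
  have h2 : pairQ c ((fun q : ℝ × ℝ => (c - q.1, q.2)) ⁻¹' A) = 0 := by
    rw [← map_r_pairQ c, Measure.map_apply (measurable_r c) hA] at hPA
    exact hPA
  have h3 : pairP ((fun q : ℝ × ℝ => (c - q.1, q.2)) ⁻¹' A) = 0 := pairP_ac c h2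
  rw [← map_r_pairP c, Measure.map_apply (measurable_r c) hA]
  exact h3

end TOConc

/-- `β_c` is strictly decreasing, convex and continuous on `[0,1]`, satisfies
`β_c(α) ≤ 1 − α`, and is symmetric about the 45-degree line:
`β_c(α) = β_c⁻¹(α)` with `β_c⁻¹(α) = inf {t ∈ [0,1] | β_c(t) ≤ α}`. -/
theorem betaC_properties (c : ℝ) (hc : 0 < c) :
    StrictAntiOn (betaC c) (Set.Icc (0 : ℝ) 1) ∧
    ConvexOn ℝ (Set.Icc (0 : ℝ) 1) (betaC c) ∧
    ContinuousOn (betaC c) (Set.Icc (0 : ℝ) 1) ∧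
    (∀ α ∈ Set.Icc (0 : ℝ) 1, betaC c α ≤ 1 - α) ∧
    (∀ α ∈ Set.Icc (0 : ℝ) 1,
      betaC c α = sInf {t ∈ Set.Icc (0 : ℝ) 1 | betaC c t ≤ α}) := by
  have hPQ : pairP ≪ pairQ c := TOConc.pairP_ac c
  have hQP : pairQ c ≪ pairP := TOConc.pairQ_ac c
  have hswap : ∀ α, tradeOff (pairQ c) pairP α = tradeOff pairP (pairQ c) α :=
    fun α => TOAux.tradeOff_swap pairP (pairQ c) (TOConc.measurable_r c)
      (TOConc.map_r_pairP c) (TOConc.map_r_pairQ c) α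
  refine ⟨?_, ?_, ?_, ?_, ?_⟩
  · exact TOAux.tradeOff_strictAntiOn pairP (pairQ c) hPQ
  · exact TOAux.tradeOff_convexOn pairP (pairQ c)
  · exact TOAux.tradeOff_continuousOn pairP (pairQ c) hPQ hQP
  · exact fun α hα => TOAux.tradeOff_le_one_sub pairP (pairQ c) hα
  · exact fun α hα => TOAux.tradeOff_inverse pairP (pairQ c) hPQ hQP hswap hα
end
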